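/- Let φ : A → A^k be a substitution of constant length k ≥ 2. Suppose that for some n ≥ 1 and every unordered pair α of distinct letters of A, the length of (φ_s)^n(α) is at most k^n − 1 (i.e. φ^n(a) and φ^n(b) agree in at least one position, for every distinct a,b). Then φ has a coincidence: there exist m ∈ ℕ and an index 0 ≤ j < k^m such that the set {φ^m(a)_j : a ∈ A} is a singleton. -/

import Mathlib

variable {A : Type*}

/-- A substitution `φ : A → A^*` extended to finite words by concatenation. -/
def subExt (φ : A → List A) (w : List A) : List A := w.flatMap φ

/-- Composition of substitutions: `(φ ∘ τ)(a) = φ(τ(a))`. -/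
def subComp (φ τ : A → List A) : A → List A := fun a => subExt φ (τ a)

/-- The `n`-th power `φ^n` of a substitution. -/
def subPow (φ : A → List A) : ℕ → A → List A
  | 0 => fun a => [a]
  | n + 1 => subComp φ (subPow φ n)

/-- The discrepancy substitution `φ_s` of `φ`, defined on unordered pairs of letters:
`φ_s({a,b})` is the word, over the alphabet of unordered pairs, obtained by concatenating
the pairs `{φ(a)_i, φ(b)_i}` over those positions `i` where `φ(a)_i ≠ φ(b)_i`. -/
def discrep [DecidableEq A] (φ : A → List A) : Sym2 A → List (Sym2 A) :=
  Sym2.lift ⟨fun a b => ((φ a).zip (φ b)).filterMap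
      (fun p => if p.1 ≠ p.2 then some (Sym2.mk p.1 p.2) else none),
    by
      intro a b
      show List.filterMap _ ((φ a).zip (φ b)) = List.filterMap _ ((φ b).zip (φ a))
      rw [← List.zip_swap (φ a) (φ b), List.filterMap_map]
      congr 1
      funext p
      obtain ⟨x, y⟩ := p
      by_cases h : x = y
      · simp [h]
      · simp only [Function.comp_apply, Prod.swap_prod_mk]
        rw [if_pos (by simp [h]), if_pos (by simp [Ne.symm h])]
        exact congrArg some (Sym2.eq_swap ▸ rfl)⟩

section Aux
variable {A : Type*}

private lemma zip_self_map (l : List A) : l.zip l = l.map (fun a => (a, a)) := by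
  induction l with
  | nil => rfl
  | cons x t ih => simp [List.zip, ih]

variable [DecidableEq A]

private def sel : A × A → Option (Sym2 A) :=
  fun p => if p.1 ≠ p.2 then some (Sym2.mk p.1 p.2) else none

private lemma discrep_mk (ψ : A → List A) (a b : A) :
    discrep ψ (Sym2.mk a b) = ((ψ a).zip (ψ b)).filterMap sel := rfl

private lemma length_subExt (φ : A → List A) (k : ℕ) (hφ : ∀ a, (φ a).length = k)
    (w : List A) : (subExt φ w).length = k * w.length := by
  induction w with
  | nil => simp [subExt]
  | cons x t ih =>
      simp only [subExt, List.flatMap_cons, List.length_append] at *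
      simp [ih, hφ x, List.length_cons, Nat.mul_succ, Nat.add_comm]

private lemma length_subPow (φ : A → List A) (k : ℕ) (hφ : ∀ a, (φ a).length = k)
    (m : ℕ) (a : A) : (subPow φ m a).length = k ^ m := by
  induction m generalizing a with
  | zero => simp [subPow]
  | succ m ih =>
      show (subExt φ (subPow φ m a)).length = k ^ (m + 1)
      rw [length_subExt φ k hφ, ih a, pow_succ, Nat.mul_comm]

private lemma subPow_succ' (φ : A → List A) (m : ℕ) (a : A) :
    subPow φ (m + 1) a = subExt (subPow φ m) (φ a) := by
  induction m generalizing a with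
  | zero =>
      show subExt φ (subPow φ 0 a) = subExt (subPow φ 0) (φ a)
      simp [subExt, subPow]
  | succ m ih =>
      show subExt φ (subPow φ (m + 1) a) = _
      rw [ih a]
      simp only [subExt, List.flatMap_assoc]
      exact List.flatMap_congr (fun x _ => rfl)

private lemma subPow_add (φ : A → List A) (m n : ℕ) (a : A) :
    subPow φ (m + n) a = subExt (subPow φ n) (subPow φ m a) := by
  induction n with
  | zero => simp [subPow, subExt]
  | succ n ih =>
      have : m + (n + 1) = (m + n) + 1 := rfl
      rw [this]
      show subExt φ (subPow φ (m + n) a) = _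
      rw [ih]
      simp only [subExt, List.flatMap_assoc]
      exact List.flatMap_congr (fun x _ => by
        show subExt φ (subPow φ n x) = subPow φ (n+1) x; rfl)

private lemma getD_subExt (f : A → List A) (L : ℕ) (hL : 0 < L)
    (hf : ∀ a, (f a).length = L) (c : A) :
    ∀ (w : List A) (j i : ℕ), j < w.length → i < L →
      (subExt f w).getD (j * L + i) c = (f (w.getD j c)).getD i c := by
  intro w
  induction w with
  | nil => intro j i hj _; simp at hj
  | cons x t ih =>
      intro j i hj hi
      have hsplit : subExt f (x :: t) = f x ++ subExt f t := by simp [subExt]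
      rw [List.getD_eq_getElem?_getD, hsplit]
      cases j with
      | zero =>
          rw [Nat.zero_mul, Nat.zero_add,
            List.getElem?_append_left (by rw [hf x]; exact hi)]
          simp [List.getD_eq_getElem?_getD]
      | succ j' =>
          have hge : (f x).length ≤ (j' + 1) * L + i := by
            rw [hf x]
            have : L ≤ (j' + 1) * L := Nat.le_mul_of_pos_left L (Nat.succ_pos j')
            omega
          rw [List.getElem?_append_right hge]
          have harith : (j' + 1) * L + i - (f x).length = j' * L + i := by
            rw [hf x]
            have : (j' + 1) * L = j' * L + L := by ring
            omega
          rw [harith, ← List.getD_eq_getElem?_getD,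
            ih j' i (by simpa using hj) hi]
          simp

private lemma zip_flatMap (g : A → List A) (L : ℕ) (hg : ∀ a, (g a).length = L) :
    ∀ (u v : List A), u.length = v.length →
      (u.flatMap g).zip (v.flatMap g) = (u.zip v).flatMap (fun p => (g p.1).zip (g p.2)) := by
  intro u
  induction u with
  | nil => intro v hv; simp [(List.length_eq_zero_iff.mp hv.symm)]
  | cons x t ih =>
      intro v hv
      cases v with
      | nil => simp at hv
      | cons y s =>
          simp only [List.flatMap_cons, List.zip_cons_cons]
          rw [List.zip_append (by rw [hg x, hg y])]
          rw [ih s (by simpa using hv)]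

private lemma pow_discrep (φ : A → List A) (k : ℕ) (hφ : ∀ a, (φ a).length = k) :
    ∀ (n : ℕ) (a b : A), a ≠ b →
      subPow (discrep φ) n (Sym2.mk a b) = discrep (subPow φ n) (Sym2.mk a b) := by
  intro n
  induction n with
  | zero =>
      intro a b hab
      show [Sym2.mk a b] = _
      rw [discrep_mk]
      show _ = ([a].zip [b]).filterMap sel
      simp [sel, List.zip, hab]
  | succ n ih =>
      intro a b hab
      rw [subPow_succ' (discrep φ) n (Sym2.mk a b)]
      rw [discrep_mk φ a b]
      rw [discrep_mk]
      rw [subPow_succ' φ n a, subPow_succ' φ n b]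
      unfold subExt
      rw [zip_flatMap (subPow φ n) (k ^ n) (length_subPow φ k hφ n) (φ a) (φ b)
        (by rw [hφ a, hφ b])]
      rw [List.filterMap_flatMap]
      -- now: (filterMap sel (zip φa φb)).flatMap (subPow (discrep φ) n)
      --    = (zip φa φb).flatMap (fun p => filterMap sel ((g p.1).zip (g p.2)))
      generalize (φ a).zip (φ b) = l
      induction l with
      | nil => simp
      | cons p t iht =>
          obtain ⟨x, y⟩ := p
          by_cases hxy : x = y
          · subst hxy
            simp only [List.filterMap_cons, List.flatMap_cons]
            rw [show sel (x, x) = none from by simp [sel]]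
            rw [show ((subPow φ n x).zip (subPow φ n x)).filterMap sel = [] from by
              rw [zip_self_map, List.filterMap_map]
              apply List.filterMap_eq_nil_iff.mpr
              intro a _; simp [sel]]
            simpa using iht
          · simp only [List.filterMap_cons, List.flatMap_cons]
            rw [show sel (x, y) = some (Sym2.mk x y) from by simp [sel, hxy]]
            simp only [List.flatMap_cons]
            rw [ih x y hxy, discrep_mk]
            rw [iht]

end Aux

section Aux2
variable {A : Type*} [DecidableEq A]

private lemma len_filterMap_sel (l : List (A × A)) :
    (l.filterMap sel).length = (l.filter (fun p => decide (p.1 ≠ p.2))).length := by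
  induction l with
  | nil => rfl
  | cons p t ih =>
      by_cases hp : p.1 = p.2
      · simp [sel, List.filterMap_cons, List.filter_cons, hp, ih]
      · simp [sel, List.filterMap_cons, List.filter_cons, hp, ih]

private lemma exists_agree (φ : A → List A) (k : ℕ) (hk : 1 ≤ k)
    (hφ : ∀ a, (φ a).length = k) (n : ℕ) (c₀ : A)
    (h : ∀ a b : A, a ≠ b → (subPow (discrep φ) n (Sym2.mk a b)).length ≤ k ^ n - 1)
    (a b : A) (hab : a ≠ b) :
    ∃ i, i < k ^ n ∧ (subPow φ n a).getD i c₀ = (subPow φ n b).getD i c₀ := by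
  have hlen := h a b hab
  rw [pow_discrep φ k hφ n a b hab, discrep_mk, len_filterMap_sel] at hlen
  set u := subPow φ n a with hu
  set v := subPow φ n b with hv
  have hul : u.length = k ^ n := length_subPow φ k hφ n a
  have hvl : v.length = k ^ n := length_subPow φ k hφ n b
  have hzl : (u.zip v).length = k ^ n := by rw [List.length_zip, hul, hvl, Nat.min_self]
  have hpos : 1 ≤ k ^ n := Nat.one_le_pow n k hk
  have hlt : ((u.zip v).filter (fun p => decide (p.1 ≠ p.2))).length < (u.zip v).length := by
    rw [hzl]; omega
  obtain ⟨p, hpmem, hpf⟩ := List.length_filter_lt_length_iff_exists.mp hlt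
  have hpeq : p.1 = p.2 := by simpa using hpf
  obtain ⟨i, hilt, hieq⟩ := List.mem_iff_getElem.mp hpmem
  rw [List.getElem_zip] at hieq
  have hik : i < k ^ n := by rw [← hzl]; exact hilt
  obtain ⟨h1, h2⟩ := Prod.mk.inj hieq
  refine ⟨i, hik, ?_⟩
  rw [List.getD_eq_getElem u c₀ (by omega), List.getD_eq_getElem v c₀ (by omega)]
  rw [h1, h2, hpeq]

private lemma descent [Fintype A] (φ : A → List A) (k n : ℕ) (hk : 1 ≤ k)
    (hφ : ∀ a, (φ a).length = k) (c₀ : A)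
    (hagree : ∀ a b : A, a ≠ b → ∃ i, i < k ^ n ∧
      (subPow φ n a).getD i c₀ = (subPow φ n b).getD i c₀) :
    ∀ (s m j : ℕ), j < k ^ m →
      (Finset.image (fun a => (subPow φ m a).getD j c₀) Finset.univ).card ≤ s + 1 →
      ∃ m' j', j' < k ^ m' ∧
        (Finset.image (fun a => (subPow φ m' a).getD j' c₀) Finset.univ).card ≤ 1 := by
  intro s
  induction s with
  | zero => intro m j hj hc; exact ⟨m, j, hj, hc⟩
  | succ s ih =>
      intro m j hj hc
      set f : A → A := fun a => (subPow φ m a).getD j c₀ with hf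
      set S := Finset.image f Finset.univ with hS
      by_cases hle : S.card ≤ s + 1
      · exact ih m j hj hle
      · have h2 : 1 < S.card := by omega
        obtain ⟨x, hx, y, hy, hxy⟩ := Finset.one_lt_card.mp h2
        obtain ⟨i, hik, hieq⟩ := hagree x y hxy
        set g : A → A := fun c => (subPow φ n c).getD i c₀ with hg
        -- new column
        have hj' : j * k ^ n + i < k ^ (m + n) := by
          have h1 : j + 1 ≤ k ^ m := hj
          have h2 : (j + 1) * k ^ n ≤ k ^ m * k ^ n := Nat.mul_le_mul_right _ h1
          have h3 : j * k ^ n + i < (j + 1) * k ^ n := by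
            have : (j + 1) * k ^ n = j * k ^ n + k ^ n := by ring
            omega
          rw [pow_add]; omega
        have hcol : ∀ a : A, (subPow φ (m + n) a).getD (j * k ^ n + i) c₀ = g (f a) := by
          intro a
          rw [subPow_add φ m n a]
          exact getD_subExt (subPow φ n) (k ^ n) (Nat.one_le_pow n k hk)
            (length_subPow φ k hφ n) c₀ (subPow φ m a) j i
            (by rw [length_subPow φ k hφ m a]; exact hj) hik
        have himg : Finset.image (fun a => (subPow φ (m + n) a).getD (j * k ^ n + i) c₀)
            Finset.univ = S.image g := by
          rw [hS, Finset.image_image]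
          exact Finset.image_congr (fun a _ => hcol a)
        have hsub : S.image g ⊆ (S.erase y).image g := by
          intro z hz
          obtain ⟨c, hcS, hcz⟩ := Finset.mem_image.mp hz
          by_cases hcy : c = y
          · exact Finset.mem_image.mpr ⟨x, Finset.mem_erase.mpr ⟨hxy, hx⟩,
              by rw [← hcz, hcy]; exact hieq⟩
          · exact Finset.mem_image.mpr ⟨c, Finset.mem_erase.mpr ⟨hcy, hcS⟩, hcz⟩
        have hcard : (S.image g).card ≤ s + 1 := by
          calc (S.image g).card ≤ ((S.erase y).image g).card := Finset.card_le_card hsub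
            _ ≤ (S.erase y).card := Finset.card_image_le
            _ = S.card - 1 := Finset.card_erase_of_mem hy
            _ ≤ s + 1 := by omega
        refine ih (m + n) (j * k ^ n + i) hj' ?_
        rw [himg]; exact hcard

end Aux2

/-- Let `φ` be a substitution of constant length `k ≥ 2` over a finite
alphabet. If for some `n ≥ 1` every unordered pair `{a,b}` of distinct letters satisfies
`|(φ_s)^n({a,b})| ≤ k^n − 1`, then `φ` has a coincidence: there are `m ∈ ℕ` and
`0 ≤ j < k^m` such that the column set `{φ^m(a)_j : a ∈ A}` is a singleton. -/
theorem stmt3 [DecidableEq A] [Fintype A] [Nonempty A] (k : ℕ) (hk : 2 ≤ k)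
    (φ : A → List A) (hφ : ∀ a, (φ a).length = k)
    (n : ℕ) (hn : 1 ≤ n)
    (h : ∀ a b : A, a ≠ b → (subPow (discrep φ) n (Sym2.mk a b)).length ≤ k ^ n - 1) :
    ∃ m : ℕ, ∃ j : ℕ, j < k ^ m ∧ ∃ c : A, ∀ a : A, (subPow φ m a).getD j c = c := by
  classical
  obtain ⟨c₀⟩ := ‹Nonempty A›
  have hk1 : 1 ≤ k := by omega
  have hagree := exists_agree φ k hk1 hφ n c₀ h
  have hstart : (Finset.image (fun a => (subPow φ 0 a).getD 0 c₀)
      Finset.univ).card ≤ Fintype.card A + 1 := by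
    calc (Finset.image (fun a => (subPow φ 0 a).getD 0 c₀) Finset.univ).card
        ≤ Finset.univ.card := Finset.card_image_le
      _ = Fintype.card A := Finset.card_univ
      _ ≤ Fintype.card A + 1 := Nat.le_succ _
  obtain ⟨m, j, hj, hcard⟩ :=
    descent φ k n hk1 hφ c₀ hagree (Fintype.card A) 0 0 (by simp) hstart
  refine ⟨m, j, hj, ?_⟩
  set f : A → A := fun a => (subPow φ m a).getD j c₀ with hfdef
  have hlen : ∀ a : A, j < (subPow φ m a).length := fun a => by
    rw [length_subPow φ k hφ m a]; exact hj
  refine ⟨f c₀, fun a => ?_⟩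
  have h1 : (subPow φ m a).getD j (f c₀) = f a := by
    rw [List.getD_eq_getElem _ _ (hlen a), hfdef]
    exact (List.getD_eq_getElem _ _ (hlen a)).symm
  rw [h1]
  exact Finset.card_le_one.mp hcard (f a)
    (Finset.mem_image_of_mem f (Finset.mem_univ a)) (f c₀)
    (Finset.mem_image_of_mem f (Finset.mem_univ c₀))
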